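/- Let P and Q be orthogonal projections on a complex Hilbert space H. Then { λ + √λ : λ ∈ σ(PQP) \ {0,1} } ∪ { λ − √λ : λ ∈ σ(PQP) \ {0,1} } ⊆ σ(PQ + QP) ⊆ { λ + √λ : λ ∈ σ(PQP) } ∪ { λ − √λ : λ ∈ σ(PQP) } ∪ {0, 2}. -/

import Mathlib

set_option synthInstance.maxHeartbeats 400000
set_option maxHeartbeats 1000000

section AuxUnitLemmas
variable {R : Type*} [Ring R]

private lemma isUnit_of_mul_eq_one_both {x y : R} (h1 : x * y = 1) (h2 : y * x = 1) :
    IsUnit x := ⟨⟨x, y, h1, h2⟩, rfl⟩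

private lemma isUnit_left_of_mul {x y : R} (h : IsUnit (x * y)) (h' : IsUnit (y * x)) :
    IsUnit x := by
  obtain ⟨u, hu⟩ := h
  obtain ⟨v, hv⟩ := h'
  have h1 : x * (y * ↑u⁻¹) = 1 := by rw [← mul_assoc, ← hu, Units.mul_inv]
  have h2 : (↑v⁻¹ * y) * x = 1 := by rw [mul_assoc, ← hv, Units.inv_mul]
  have hlr : (↑v⁻¹ * y : R) = y * ↑u⁻¹ := by
    calc (↑v⁻¹ * y : R) = (↑v⁻¹ * y) * (x * (y * ↑u⁻¹)) := by rw [h1, mul_one]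
    _ = ((↑v⁻¹ * y) * x) * (y * ↑u⁻¹) := by noncomm_ring
    _ = y * ↑u⁻¹ := by rw [h2, one_mul]
  exact isUnit_of_mul_eq_one_both h1 (hlr ▸ h2)

private lemma isUnit_of_isUnit_mul_comm {x y : R} (hxy : x * y = y * x) (h : IsUnit (x * y)) :
    IsUnit x := isUnit_left_of_mul h (hxy ▸ h)

private lemma unit_transfer {x w y : R} (hw : IsUnit w) (h : x * w = y) :
    (IsUnit x ↔ IsUnit y) := by
  obtain ⟨u, hu⟩ := hw
  subst h
  rw [← hu]
  exact (Units.isUnit_mul_units x u).symm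

private lemma isUnit_sub_comm {x y : R} (h : IsUnit (x - y)) : IsUnit (y - x) := by
  rw [← neg_sub x y]; exact h.neg

/-- Symmetry lemma: if `c` anticommutes with `b`, `b*b + c*c = 1`, and `t*t ≠ 1`, then
invertibility of `b + t•1` implies that of `b - t•1`. -/
private lemma sym_lemma [Algebra ℂ R] {b c : R}
    (hbc : c * b = -(b * c)) (h1 : b * b + c * c = 1) {t : ℂ} (ht : t * t ≠ 1)
    (hU : IsUnit (b + t • 1)) : IsUnit (b - t • 1) := by
  obtain ⟨u, hu⟩ := hU
  have hur : (b + t • 1) * ↑u⁻¹ = 1 := by rw [← hu, Units.mul_inv]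
  have hul : (↑u⁻¹ : R) * (b + t • 1) = 1 := by rw [← hu, Units.inv_mul]
  have hd : (1 : ℂ) - t * t ≠ 0 := by
    intro h; apply ht; linear_combination -h
  set w : R := ((1 - t*t)⁻¹ : ℂ) • (b + t • 1 - c * ↑u⁻¹ * c) with hw
  have hsc : ((1 - t*t)⁻¹ : ℂ) * (1 - t*t) = 1 := inv_mul_cancel₀ hd
  have hk1 : (b - t • 1) * (b + t • 1 - c * ↑u⁻¹ * c) = (1 - t*t) • 1 := by
    have e1 : (b - t • 1) * c = -(c * (b + t • 1)) := by
      rw [sub_mul, mul_add, hbc]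
      rw [smul_mul_assoc, mul_smul_comm, one_mul, mul_one]
      abel
    have e2 : (b - t • 1) * (c * ↑u⁻¹ * c) = -(c * c) := by
      calc (b - t • 1) * (c * ↑u⁻¹ * c) = ((b - t • 1) * c) * (↑u⁻¹ * c) := by noncomm_ring
      _ = -((c * ((b + t • 1) * ↑u⁻¹)) * c) := by rw [e1]; noncomm_ring
      _ = -(c * c) := by rw [hur, mul_one]
    have e3 : (b - t • 1) * (b + t • 1) = b * b - (t*t) • 1 := by
      simp only [sub_mul, mul_add, add_mul, mul_sub, smul_mul_assoc, mul_smul_comm,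
        smul_smul, smul_add, smul_sub, mul_one, one_mul]
      abel
    rw [mul_sub, e2, e3, sub_neg_eq_add, sub_smul, one_smul, ← h1]
    abel
  have hk2 : (b + t • 1 - c * ↑u⁻¹ * c) * (b - t • 1) = (1 - t*t) • 1 := by
    have e1 : c * (b - t • 1) = -((b + t • 1) * c) := by
      rw [mul_sub, add_mul, hbc]
      rw [smul_mul_assoc, mul_smul_comm, one_mul, mul_one]
      abel
    have e2 : (c * ↑u⁻¹ * c) * (b - t • 1) = -(c * c) := by
      calc (c * ↑u⁻¹ * c) * (b - t • 1) = c * (↑u⁻¹ * (c * (b - t • 1))) := by noncomm_ring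
      _ = -(c * ((↑u⁻¹ * (b + t • 1)) * c)) := by rw [e1]; noncomm_ring
      _ = -(c * c) := by rw [hul, one_mul]
    have e3 : (b + t • 1) * (b - t • 1) = b * b - (t*t) • 1 := by
      simp only [sub_mul, mul_add, add_mul, mul_sub, smul_mul_assoc, mul_smul_comm,
        smul_smul, smul_add, smul_sub, mul_one, one_mul]
      abel
    rw [sub_mul, e2, e3, sub_neg_eq_add, sub_smul, one_smul, ← h1]
    abel
  refine isUnit_of_mul_eq_one_both (y := w) ?_ ?_
  · rw [hw, mul_smul_comm, hk1, smul_smul, hsc, one_smul]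
  · rw [hw, smul_mul_assoc, hk2, smul_smul, hsc, one_smul]

end AuxUnitLemmas

/-- For orthogonal projections `P, Q` on a complex Hilbert space,
`{λ ± √λ : λ ∈ σ(PQP) \ {0,1}} ⊆ σ(PQ + QP) ⊆ {λ ± √λ : λ ∈ σ(PQP)} ∪ {0, 2}`. -/
theorem spectrum_anticommutator_subsets
    {H : Type*} [NormedAddCommGroup H] [InnerProductSpace ℂ H] [CompleteSpace H]
    (P Q : H →L[ℂ] H) (hP : IsSelfAdjoint P) (hP2 : P * P = P)
    (hQ : IsSelfAdjoint Q) (hQ2 : Q * Q = Q) :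
    {z : ℂ | ∃ l : ℝ, (l : ℂ) ∈ spectrum ℂ (P * Q * P) ∧ l ≠ 0 ∧ l ≠ 1 ∧
        (z = ((l + Real.sqrt l : ℝ) : ℂ) ∨ z = ((l - Real.sqrt l : ℝ) : ℂ))}
      ⊆ spectrum ℂ (P * Q + Q * P) ∧
    spectrum ℂ (P * Q + Q * P) ⊆
      {z : ℂ | ∃ l : ℝ, (l : ℂ) ∈ spectrum ℂ (P * Q * P) ∧
        (z = ((l + Real.sqrt l : ℝ) : ℂ) ∨ z = ((l - Real.sqrt l : ℝ) : ℂ))}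
        ∪ {0, 2} := by
  have hp1 : ∀ x : H →L[ℂ] H, P * (P * x) = P * x := fun x => by rw [← mul_assoc, hP2]
  have hq1 : ∀ x : H →L[ℂ] H, Q * (Q * x) = Q * x := fun x => by rw [← mul_assoc, hQ2]
  have mem_iff : ∀ (u : ℂ) (T : H →L[ℂ] H),
      u ∈ spectrum ℂ T ↔ ¬ IsUnit (u • 1 - T) := fun u T => by
    rw [spectrum.mem_iff, Algebra.algebraMap_eq_smul_one]
  -- anticommutation data
  have hbc : (P - Q) * (P + Q - 1) = -((P + Q - 1) * (P - Q)) := by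
    simp only [add_mul, mul_add, sub_mul, mul_sub, mul_assoc, one_mul, mul_one, smul_mul_assoc, mul_smul_comm, neg_mul, mul_neg, smul_smul, smul_add, smul_sub, smul_neg, neg_smul, neg_neg, hp1, hq1, hP2, hQ2]; match_scalars <;> ring
  have hb2c2 : (P + Q - 1) * (P + Q - 1) + (P - Q) * (P - Q) = 1 := by
    simp only [add_mul, mul_add, sub_mul, mul_sub, mul_assoc, one_mul, mul_one, smul_mul_assoc, mul_smul_comm, neg_mul, mul_neg, smul_smul, smul_add, smul_sub, smul_neg, neg_smul, neg_neg, hp1, hq1, hP2, hQ2]; match_scalars <;> ring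
  have hsym : ∀ t : ℂ, t * t ≠ 1 →
      ¬ IsUnit ((P + Q - 1) - t • 1) → ¬ IsUnit ((P + Q - 1) + t • 1) := by
    intro t ht hnot hunit
    exact hnot (sym_lemma hbc hb2c2 ht hunit)
  have hsym' : ∀ t : ℂ, t * t ≠ 1 →
      ¬ IsUnit ((P + Q - 1) + t • 1) → ¬ IsUnit ((P + Q - 1) - t • 1) := by
    intro t ht hnot hunit
    apply hnot
    have h2 : IsUnit ((P + Q - 1) + (-t) • 1) := by
      rw [neg_smul, ← sub_eq_add_neg]; exact hunit
    have h3 := sym_lemma hbc hb2c2 (t := -t) (by rw [neg_mul_neg]; exact ht) h2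
    rwa [neg_smul, sub_neg_eq_add] at h3
  -- U, V machinery
  have hUV : ∀ l : ℂ, (P*Q*P - l•P + (1 - P)) * (1 - (1-P)*Q*(1-P) - l•(1-P))
      = (P*Q + Q*P + 1 - P - Q) - l•1 := by
    intro l
    simp only [add_mul, mul_add, sub_mul, mul_sub, mul_assoc, one_mul, mul_one, smul_mul_assoc, mul_smul_comm, neg_mul, mul_neg, smul_smul, smul_add, smul_sub, smul_neg, neg_smul, neg_neg, hp1, hq1, hP2, hQ2]; match_scalars <;> ring
  have hVU : ∀ l : ℂ, (1 - (1-P)*Q*(1-P) - l•(1-P)) * (P*Q*P - l•P + (1 - P))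
      = (P*Q + Q*P + 1 - P - Q) - l•1 := by
    intro l
    simp only [add_mul, mul_add, sub_mul, mul_sub, mul_assoc, one_mul, mul_one, smul_mul_assoc, mul_smul_comm, neg_mul, mul_neg, smul_smul, smul_add, smul_sub, smul_neg, neg_smul, neg_neg, hp1, hq1, hP2, hQ2]; match_scalars <;> ring
  have hUW : ∀ l : ℂ, (P*Q*P - l•P + (1 - P)) * (P - l•(1-P)) = P*Q*P - l•1 := by
    intro l
    simp only [add_mul, mul_add, sub_mul, mul_sub, mul_assoc, one_mul, mul_one, smul_mul_assoc, mul_smul_comm, neg_mul, mul_neg, smul_smul, smul_add, smul_sub, smul_neg, neg_smul, neg_neg, hp1, hq1, hP2, hQ2]; match_scalars <;> ring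
  have hWunit : ∀ l : ℂ, l ≠ 0 → IsUnit (P - l•(1-P)) := by
    intro l hl
    refine isUnit_of_mul_eq_one_both (y := P - l⁻¹•(1-P)) ?_ ?_
    · have key : (P - l•(1-P)) * (P - l⁻¹•(1-P)) = P + (l*l⁻¹)•(1-P) := by
        simp only [add_mul, mul_add, sub_mul, mul_sub, mul_assoc, one_mul, mul_one, smul_mul_assoc, mul_smul_comm, neg_mul, mul_neg, smul_smul, smul_add, smul_sub, smul_neg, neg_smul, neg_neg, hp1, hq1, hP2, hQ2]; match_scalars <;> ring
      rw [key, mul_inv_cancel₀ hl, one_smul]; abel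
    · have key : (P - l⁻¹•(1-P)) * (P - l•(1-P)) = P + (l*l⁻¹)•(1-P) := by
        simp only [add_mul, mul_add, sub_mul, mul_sub, mul_assoc, one_mul, mul_one, smul_mul_assoc, mul_smul_comm, neg_mul, mul_neg, smul_smul, smul_add, smul_sub, smul_neg, neg_smul, neg_neg, hp1, hq1, hP2, hQ2]; match_scalars <;> ring
      rw [key, mul_inv_cancel₀ hl, one_smul]; abel
  have hVW2 : ∀ l : ℂ, (1 - (1-P)*Q*(1-P) - l•(1-P)) * ((1-l)•P + (1-P))
      = (1-l)•1 - (1-P)*Q*(1-P) := by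
    intro l
    simp only [add_mul, mul_add, sub_mul, mul_sub, mul_assoc, one_mul, mul_one, smul_mul_assoc, mul_smul_comm, neg_mul, mul_neg, smul_smul, smul_add, smul_sub, smul_neg, neg_smul, neg_neg, hp1, hq1, hP2, hQ2]; match_scalars <;> ring
  have hW2unit : ∀ l : ℂ, (1 - l) ≠ 0 → IsUnit ((1-l)•P + (1-P)) := by
    intro l hl
    refine isUnit_of_mul_eq_one_both (y := (1-l)⁻¹•P + (1-P)) ?_ ?_
    · have key : ((1-l)•P + (1-P)) * ((1-l)⁻¹•P + (1-P)) = ((1-l)*(1-l)⁻¹)•P + (1-P) := by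
        simp only [add_mul, mul_add, sub_mul, mul_sub, mul_assoc, one_mul, mul_one, smul_mul_assoc, mul_smul_comm, neg_mul, mul_neg, smul_smul, smul_add, smul_sub, smul_neg, neg_smul, neg_neg, hp1, hq1, hP2, hQ2]; match_scalars <;> ring
      rw [key, mul_inv_cancel₀ hl, one_smul]; abel
    · have key : ((1-l)⁻¹•P + (1-P)) * ((1-l)•P + (1-P)) = ((1-l)*(1-l)⁻¹)•P + (1-P) := by
        simp only [add_mul, mul_add, sub_mul, mul_sub, mul_assoc, one_mul, mul_one, smul_mul_assoc, mul_smul_comm, neg_mul, mul_neg, smul_smul, smul_add, smul_sub, smul_neg, neg_smul, neg_neg, hp1, hq1, hP2, hQ2]; match_scalars <;> ring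
      rw [key, mul_inv_cancel₀ hl, one_smul]; abel
  have hMN : ∀ l c : ℂ, (1-l) * c = l →
      (Q - Q*P*Q - (1-l)•1) * (c•(1-Q) - Q) = Q*P*Q - l•1 := by
    intro l c h
    have key : (Q - Q*P*Q - (1-l)•1) * (c•(1-Q) - Q)
        = Q*P*Q - (1-(1-l))•Q - ((1-l)*c)•(1-Q) := by
      simp only [add_mul, mul_add, sub_mul, mul_sub, mul_assoc, one_mul, mul_one, smul_mul_assoc, mul_smul_comm, neg_mul, mul_neg, smul_smul, smul_add, smul_sub, smul_neg, neg_smul, neg_neg, hp1, hq1, hP2, hQ2]; match_scalars <;> ring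
    rw [key, h, show (1-(1-l) : ℂ) = l by ring]
    match_scalars <;> ring
  have hNunit : ∀ c : ℂ, c ≠ 0 → IsUnit (c•(1-Q) - Q) := by
    intro c hc
    refine isUnit_of_mul_eq_one_both (y := c⁻¹•(1-Q) - Q) ?_ ?_
    · have key : (c•(1-Q) - Q) * (c⁻¹•(1-Q) - Q) = (c*c⁻¹)•(1-Q) + Q := by
        simp only [add_mul, mul_add, sub_mul, mul_sub, mul_assoc, one_mul, mul_one, smul_mul_assoc, mul_smul_comm, neg_mul, mul_neg, smul_smul, smul_add, smul_sub, smul_neg, neg_smul, neg_neg, hp1, hq1, hP2, hQ2]; match_scalars <;> ring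
      rw [key, mul_inv_cancel₀ hc, one_smul]; abel
    · have key : (c⁻¹•(1-Q) - Q) * (c•(1-Q) - Q) = (c*c⁻¹)•(1-Q) + Q := by
        simp only [add_mul, mul_add, sub_mul, mul_sub, mul_assoc, one_mul, mul_one, smul_mul_assoc, mul_smul_comm, neg_mul, mul_neg, smul_smul, smul_add, smul_sub, smul_neg, neg_smul, neg_neg, hp1, hq1, hP2, hQ2]; match_scalars <;> ring
      rw [key, mul_inv_cancel₀ hc, one_smul]; abel
  -- spectra swap lemmas
  have hswapPQ : ∀ u : ℂ, u ≠ 0 → u ∈ spectrum ℂ (Q*P*Q) → u ∈ spectrum ℂ (P*Q*P) := by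
    intro u hu hmem
    have h1 : (Q*P) * (P*Q) = Q*P*Q := by
      simp only [add_mul, mul_add, sub_mul, mul_sub, mul_assoc, one_mul, mul_one, smul_mul_assoc, mul_smul_comm, neg_mul, mul_neg, smul_smul, smul_add, smul_sub, smul_neg, neg_smul, neg_neg, hp1, hq1, hP2, hQ2]
      try (match_scalars <;> ring)
    have h2 : (P*Q) * (Q*P) = P*Q*P := by
      simp only [add_mul, mul_add, sub_mul, mul_sub, mul_assoc, one_mul, mul_one, smul_mul_assoc, mul_smul_comm, neg_mul, mul_neg, smul_smul, smul_add, smul_sub, smul_neg, neg_smul, neg_neg, hp1, hq1, hP2, hQ2]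
      try (match_scalars <;> ring)
    have hset := spectrum.nonzero_mul_comm (𝕜 := ℂ) (Q*P) (P*Q)
    rw [h1, h2] at hset
    have hmem2 : u ∈ spectrum ℂ (P*Q*P) \ {0} := by
      rw [← hset]; exact ⟨hmem, by simpa using hu⟩
    exact hmem2.1
  have hswapP'Q : ∀ u : ℂ, u ≠ 0 →
      u ∈ spectrum ℂ ((1-P)*Q*(1-P)) → u ∈ spectrum ℂ (Q*(1-P)*Q) := by
    intro u hu hmem
    have h1 : ((1-P)*Q) * (Q*(1-P)) = (1-P)*Q*(1-P) := by
      simp only [add_mul, mul_add, sub_mul, mul_sub, mul_assoc, one_mul, mul_one, smul_mul_assoc, mul_smul_comm, neg_mul, mul_neg, smul_smul, smul_add, smul_sub, smul_neg, neg_smul, neg_neg, hp1, hq1, hP2, hQ2]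
      try (match_scalars <;> ring)
    have h2 : (Q*(1-P)) * ((1-P)*Q) = Q*(1-P)*Q := by
      simp only [add_mul, mul_add, sub_mul, mul_sub, mul_assoc, one_mul, mul_one, smul_mul_assoc, mul_smul_comm, neg_mul, mul_neg, smul_smul, smul_add, smul_sub, smul_neg, neg_smul, neg_neg, hp1, hq1, hP2, hQ2]
      try (match_scalars <;> ring)
    have hset := spectrum.nonzero_mul_comm (𝕜 := ℂ) ((1-P)*Q) (Q*(1-P))
    rw [h1, h2] at hset
    have hmem2 : u ∈ spectrum ℂ (Q*(1-P)*Q) \ {0} := by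
      rw [← hset]; exact ⟨hmem, by simpa using hu⟩
    exact hmem2.1
  -- E factorizations
  have hEfact : ∀ t : ℂ, ((P+Q-1) - t•1) * ((P+Q-1) + t•1)
      = (P*Q + Q*P + 1 - P - Q) - (t*t)•1 := by
    intro t
    simp only [add_mul, mul_add, sub_mul, mul_sub, mul_assoc, one_mul, mul_one, smul_mul_assoc, mul_smul_comm, neg_mul, mul_neg, smul_smul, smul_add, smul_sub, smul_neg, neg_smul, neg_neg, hp1, hq1, hP2, hQ2]; match_scalars <;> ring
  have hEfact' : ∀ t : ℂ, ((P+Q-1) + t•1) * ((P+Q-1) - t•1)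
      = (P*Q + Q*P + 1 - P - Q) - (t*t)•1 := by
    intro t
    simp only [add_mul, mul_add, sub_mul, mul_sub, mul_assoc, one_mul, mul_one, smul_mul_assoc, mul_smul_comm, neg_mul, mul_neg, smul_smul, smul_add, smul_sub, smul_neg, neg_smul, neg_neg, hp1, hq1, hP2, hQ2]; match_scalars <;> ring
  -- T factorizations
  have hTfact : ∀ t : ℂ, ((P+Q-1) - t•1) * ((P+Q) + t•1) = (P*Q + Q*P) - (t*t + t)•1 := by
    intro t
    simp only [add_mul, mul_add, sub_mul, mul_sub, mul_assoc, one_mul, mul_one, smul_mul_assoc, mul_smul_comm, neg_mul, mul_neg, smul_smul, smul_add, smul_sub, smul_neg, neg_smul, neg_neg, hp1, hq1, hP2, hQ2]; match_scalars <;> ring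
  have hTfact' : ∀ t : ℂ, ((P+Q) + t•1) * ((P+Q-1) - t•1) = (P*Q + Q*P) - (t*t + t)•1 := by
    intro t
    simp only [add_mul, mul_add, sub_mul, mul_sub, mul_assoc, one_mul, mul_one, smul_mul_assoc, mul_smul_comm, neg_mul, mul_neg, smul_smul, smul_add, smul_sub, smul_neg, neg_smul, neg_neg, hp1, hq1, hP2, hQ2]; match_scalars <;> ring
  have hTfact2 : ∀ t : ℂ, ((P+Q-1) + t•1) * ((P+Q) - t•1) = (P*Q + Q*P) - (t*t - t)•1 := by
    intro t
    simp only [add_mul, mul_add, sub_mul, mul_sub, mul_assoc, one_mul, mul_one, smul_mul_assoc, mul_smul_comm, neg_mul, mul_neg, smul_smul, smul_add, smul_sub, smul_neg, neg_smul, neg_neg, hp1, hq1, hP2, hQ2]; match_scalars <;> ring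
  have hTfact2' : ∀ t : ℂ, ((P+Q) - t•1) * ((P+Q-1) + t•1) = (P*Q + Q*P) - (t*t - t)•1 := by
    intro t
    simp only [add_mul, mul_add, sub_mul, mul_sub, mul_assoc, one_mul, mul_one, smul_mul_assoc, mul_smul_comm, neg_mul, mul_neg, smul_smul, smul_add, smul_sub, smul_neg, neg_smul, neg_neg, hp1, hq1, hP2, hQ2]; match_scalars <;> ring
  have hTroot : ∀ m m' zz : ℂ, m + m' = 1 → m * m' = -zz →
      ((P+Q) - m•1) * ((P+Q) - m'•1) = (P*Q + Q*P) - zz•1 := by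
    intro m m' zz h1 h2
    have key : ((P+Q) - m•1) * ((P+Q) - m'•1)
        = (P*Q + Q*P) + (1 - (m+m'))•(P+Q) + (m*m')•1 := by
      simp only [add_mul, mul_add, sub_mul, mul_sub, mul_assoc, one_mul, mul_one, smul_mul_assoc, mul_smul_comm, neg_mul, mul_neg, smul_smul, smul_add, smul_sub, smul_neg, neg_smul, neg_neg, hp1, hq1, hP2, hQ2]; match_scalars <;> ring
    rw [key, h1, h2]
    match_scalars <;> ring
  constructor
  · -- first inclusion
    rintro z ⟨l, hlmem, hl0, hl1, hzeq⟩
    have hstar : P*Q*P = star (Q*P) * (Q*P) := by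
      rw [star_mul, hP.star_eq, hQ.star_eq]
      simp only [add_mul, mul_add, sub_mul, mul_sub, mul_assoc, one_mul, mul_one, smul_mul_assoc, mul_smul_comm, neg_mul, mul_neg, smul_smul, smul_add, smul_sub, smul_neg, neg_smul, neg_neg, hp1, hq1, hP2, hQ2]
      try (match_scalars <;> ring)
    have hpos : (0 : H →L[ℂ] H) ≤ P*Q*P := by rw [hstar]; exact star_mul_self_nonneg _
    have hlR : l ∈ spectrum ℝ (P*Q*P) := by
      have h' : algebraMap ℝ ℂ l ∈ spectrum ℂ (P*Q*P) := by
        rwa [show algebraMap ℝ ℂ l = (l : ℂ) from rfl]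
      exact (spectrum.algebraMap_mem_iff ℂ).mp h'
    have hl_nonneg : (0:ℝ) ≤ l := spectrum_nonneg_of_nonneg hpos hlR
    set s := Real.sqrt l with hsdef
    have hss : s * s = l := Real.mul_self_sqrt hl_nonneg
    have hSS : ((s:ℂ)) * (s:ℂ) = (l:ℂ) := by exact_mod_cast hss
    have hS1 : ((s:ℂ)) * (s:ℂ) ≠ 1 := by
      rw [hSS]; exact_mod_cast hl1
    have hL0 : (l:ℂ) ≠ 0 := by exact_mod_cast hl0
    have hPQPnot : ¬ IsUnit ((l:ℂ)•1 - P*Q*P) := (mem_iff _ _).mp hlmem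
    have hUnot : ¬ IsUnit (P*Q*P - (l:ℂ)•P + (1 - P)) := by
      intro h
      exact hPQPnot (isUnit_sub_comm ((unit_transfer (hWunit _ hL0) (hUW _)).mp h))
    have hEnot : ¬ IsUnit ((P*Q + Q*P + 1 - P - Q) - (l:ℂ)•1) := by
      intro h
      exact hUnot (isUnit_of_isUnit_mul_comm ((hUV _).trans (hVU _).symm)
        (by rw [hUV _]; exact h))
    have hfact : ((P+Q-1) - (s:ℂ)•1) * ((P+Q-1) + (s:ℂ)•1)
        = (P*Q + Q*P + 1 - P - Q) - (l:ℂ)•1 := by rw [hEfact, hSS]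
    have hone : ¬ IsUnit ((P+Q-1) - (s:ℂ)•1) ∨ ¬ IsUnit ((P+Q-1) + (s:ℂ)•1) := by
      by_contra hcon
      push_neg at hcon
      exact hEnot (by rw [← hfact]; exact hcon.1.mul hcon.2)
    have hboth : ¬ IsUnit ((P+Q-1) - (s:ℂ)•1) ∧ ¬ IsUnit ((P+Q-1) + (s:ℂ)•1) := by
      rcases hone with h | h
      · exact ⟨h, hsym _ hS1 h⟩
      · exact ⟨hsym' _ hS1 h, h⟩
    rcases hzeq with rfl | rfl
    · refine (mem_iff _ _).mpr fun h => hboth.1 ?_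
      have hfz : ((P+Q-1) - (s:ℂ)•1) * ((P+Q) + (s:ℂ)•1)
          = (P*Q + Q*P) - (((l + s : ℝ)) : ℂ)•1 := by
        rw [hTfact, show ((s:ℂ)*(s:ℂ) + (s:ℂ)) = (((l + s : ℝ)) : ℂ) by push_cast; rw [hSS]]
      have hfz' : ((P+Q) + (s:ℂ)•1) * ((P+Q-1) - (s:ℂ)•1)
          = (P*Q + Q*P) - (((l + s : ℝ)) : ℂ)•1 := by
        rw [hTfact', show ((s:ℂ)*(s:ℂ) + (s:ℂ)) = (((l + s : ℝ)) : ℂ) by push_cast; rw [hSS]]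
      exact isUnit_of_isUnit_mul_comm (hfz.trans hfz'.symm)
        (by rw [hfz]; exact isUnit_sub_comm h)
    · refine (mem_iff _ _).mpr fun h => hboth.2 ?_
      have hfz : ((P+Q-1) + (s:ℂ)•1) * ((P+Q) - (s:ℂ)•1)
          = (P*Q + Q*P) - (((l - s : ℝ)) : ℂ)•1 := by
        rw [hTfact2, show ((s:ℂ)*(s:ℂ) - (s:ℂ)) = (((l - s : ℝ)) : ℂ) by push_cast; rw [hSS]]
      have hfz' : ((P+Q) - (s:ℂ)•1) * ((P+Q-1) + (s:ℂ)•1)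
          = (P*Q + Q*P) - (((l - s : ℝ)) : ℂ)•1 := by
        rw [hTfact2', show ((s:ℂ)*(s:ℂ) - (s:ℂ)) = (((l - s : ℝ)) : ℂ) by push_cast; rw [hSS]]
      exact isUnit_of_isUnit_mul_comm (hfz.trans hfz'.symm)
        (by rw [hfz]; exact isUnit_sub_comm h)
  · -- second inclusion
    intro z hz
    by_cases hz0 : z = 0
    · exact Set.mem_union_right _ (by simp [hz0])
    by_cases hz2 : z = 2
    · exact Set.mem_union_right _ (by simp [hz2])
    -- main case
    obtain ⟨w, hw⟩ := IsAlgClosed.exists_pow_nat_eq (k := ℂ) (1 + 4*z) (n := 2) (by norm_num)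
    have hww : w * w = 1 + 4*z := by rw [← hw]; ring
    have hTnot : ¬ IsUnit ((P*Q + Q*P) - z•1) := fun h =>
      ((mem_iff z _).mp hz) (isUnit_sub_comm h)
    have hone : ∃ μ : ℂ, (μ*μ - μ = z) ∧ ¬ IsUnit ((P+Q) - μ•1) := by
      by_contra hcon
      push_neg at hcon
      have hr1 : ((1+w)/2)*((1+w)/2) - (1+w)/2 = z := by
        have : ((1+w)/2)*((1+w)/2) - (1+w)/2 = (w*w - 1)/4 := by ring
        rw [this, hww]; ring
      have hr2 : ((1-w)/2)*((1-w)/2) - (1-w)/2 = z := by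
        have : ((1-w)/2)*((1-w)/2) - (1-w)/2 = (w*w - 1)/4 := by ring
        rw [this, hww]; ring
      have hsum : (1+w)/2 + (1-w)/2 = 1 := by ring
      have hprod : (1+w)/2 * ((1-w)/2) = -z := by
        have : (1+w)/2 * ((1-w)/2) = (1 - w*w)/4 := by ring
        rw [this, hww]; ring
      exact hTnot (by
        rw [← hTroot ((1+w)/2) ((1-w)/2) z hsum hprod]
        exact (hcon _ hr1).mul (hcon _ hr2))
    obtain ⟨μ, hμroot, hμnot⟩ := hone
    have hμmem : μ ∈ spectrum ℂ (P+Q) :=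
      (mem_iff μ (P+Q)).mpr fun h => hμnot (isUnit_sub_comm h)
    have ha : IsSelfAdjoint (P+Q) := hP.add hQ
    have hμre : μ = ((μ.re : ℝ) : ℂ) := ha.mem_spectrum_eq_re hμmem
    set m : ℝ := μ.re with hmdef
    have hμ0 : μ ≠ 0 := fun h => hz0 (by rw [← hμroot, h]; ring)
    have hμ1 : μ ≠ 1 := fun h => hz0 (by rw [← hμroot, h]; ring)
    have hμ2 : μ ≠ 2 := fun h => hz2 (by rw [← hμroot, h]; norm_num)
    set Λ : ℂ := (((m-1)^2 : ℝ) : ℂ) with hΛdef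
    have hΛeq : (μ-1)*(μ-1) = Λ := by
      rw [hΛdef, hμre]; push_cast; ring
    have hΛ0 : Λ ≠ 0 := by
      intro h
      exact hμ1 (sub_eq_zero.mp (mul_self_eq_zero.mp (hΛeq.trans h)))
    have hΛ1 : Λ ≠ 1 := by
      intro h
      have h2 : (μ-1)*(μ-1) = 1 := hΛeq.trans h
      have h3 : μ * (μ - 2) = 0 := by linear_combination h2
      rcases mul_eq_zero.mp h3 with h4 | h4
      · exact hμ0 h4
      · exact hμ2 (sub_eq_zero.mp h4)
    have h1Λ0 : (1 : ℂ) - Λ ≠ 0 := sub_ne_zero.mpr (fun h => hΛ1 h.symm)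
    have hEnot : ¬ IsUnit ((P*Q + Q*P + 1 - P - Q) - Λ•1) := by
      intro h
      have hfib : ((P+Q-1) - (μ-1)•1) * ((P+Q-1) + (μ-1)•1)
          = (P*Q + Q*P + 1 - P - Q) - Λ•1 := by rw [hEfact, hΛeq]
      have hfib' : ((P+Q-1) + (μ-1)•1) * ((P+Q-1) - (μ-1)•1)
          = (P*Q + Q*P + 1 - P - Q) - Λ•1 := by rw [hEfact', hΛeq]
      have hkey : IsUnit ((P+Q-1) - (μ-1)•1) :=
        isUnit_of_isUnit_mul_comm (hfib.trans hfib'.symm) (by rw [hfib]; exact h)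
      apply hμnot
      have hrewrite : (P+Q-1) - (μ-1)•1 = (P+Q) - μ•1 := by
        rw [sub_smul, one_smul]; abel
      rwa [hrewrite] at hkey
    have hUorV : ¬ IsUnit (P*Q*P - Λ•P + (1 - P))
        ∨ ¬ IsUnit (1 - (1-P)*Q*(1-P) - Λ•(1-P)) := by
      by_contra hcon
      push_neg at hcon
      exact hEnot (by rw [← hUV Λ]; exact hcon.1.mul hcon.2)
    have hΛmem : Λ ∈ spectrum ℂ (P*Q*P) := by
      rcases hUorV with hUnot | hVnot
      · refine (mem_iff _ _).mpr fun h => hUnot ?_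
        exact (unit_transfer (hWunit Λ hΛ0) (hUW Λ)).mpr (isUnit_sub_comm h)
      · have hS'mem : (1-Λ) ∈ spectrum ℂ ((1-P)*Q*(1-P)) := by
          refine (mem_iff _ _).mpr fun h => hVnot ?_
          exact (unit_transfer (hW2unit Λ h1Λ0) (hVW2 Λ)).mpr h
        have hQ'mem : (1-Λ) ∈ spectrum ℂ (Q*(1-P)*Q) := hswapP'Q _ h1Λ0 hS'mem
        have hMnot : ¬ IsUnit (Q - Q*P*Q - (1-Λ)•1) := by
          intro h
          apply (mem_iff _ _).mp hQ'mem
          have hidM : Q - Q*P*Q - (1-Λ)•1 = -((1-Λ)•1 - Q*(1-P)*Q) := by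
            simp only [add_mul, mul_add, sub_mul, mul_sub, mul_assoc, one_mul, mul_one, smul_mul_assoc, mul_smul_comm, neg_mul, mul_neg, smul_smul, smul_add, smul_sub, smul_neg, neg_smul, neg_neg, hp1, hq1, hP2, hQ2]; match_scalars <;> ring
          rw [hidM] at h
          exact (IsUnit.neg_iff _).mp h
        have hc : (1-Λ) * (Λ * (1-Λ)⁻¹) = Λ := by field_simp
        have hc0 : Λ * (1-Λ)⁻¹ ≠ 0 := mul_ne_zero hΛ0 (inv_ne_zero h1Λ0)
        have hQPQnot : ¬ IsUnit (Q*P*Q - Λ•1) := fun h =>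
          hMnot ((unit_transfer (hNunit _ hc0) (hMN Λ _ hc)).mpr h)
        have hQPQmem : Λ ∈ spectrum ℂ (Q*P*Q) :=
          (mem_iff _ _).mpr fun h => hQPQnot (isUnit_sub_comm h)
        exact hswapPQ Λ hΛ0 hQPQmem
    -- common ending
    refine Set.mem_union_left _ ⟨(m-1)^2, hΛmem, ?_⟩
    have hzre : z = ((m*m - m : ℝ) : ℂ) := by
      rw [← hμroot, hμre]; push_cast; ring
    rcases le_or_gt 1 m with hm | hm
    · left
      rw [hzre]
      norm_cast
      rw [Real.sqrt_sq_eq_abs, abs_of_nonneg (by linarith : (0:ℝ) ≤ m - 1)]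
      ring
    · right
      rw [hzre]
      norm_cast
      rw [Real.sqrt_sq_eq_abs, abs_of_nonpos (by linarith : m - 1 ≤ 0)]
      ring
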